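/- Let f : K × K → ℝ be cyclic pseudomonotone of type (I) and suppose there exist u,v ∈ K with f(u,v) > 0, and suppose the infimum φ(x₁) = inf over n ≥ 3 and x₂,…,x_{n−2} ∈ K of f(x₁,x₂) + ⋯ + f(x_{n−2},v) is finite (it is bounded below by f(x₁,u)). Then with g = −φ one has f(x,y) ≥ g(y) − g(x) for all x,y ∈ K. Moreover, if f(·,y) is concave for each y ∈ K (with K convex in a real vector space), then g is convex. -/

import Mathlib

/-- The set of values of chain sums `f(x,x₂)+⋯+f(x_{n-2},v)` starting at `x`,
over chains in `K` of arbitrary length (corresponding to all `n ≥ 3`). -/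
def chainValues {V : Type*} (K : Set V) (f : V → V → ℝ) (v : V) (x : V) : Set ℝ :=
  { s | ∃ (m : ℕ) (c : ℕ → V), c 0 = x ∧ (∀ i, c i ∈ K) ∧
        s = (∑ i ∈ Finset.range m, f (c i) (c (i + 1))) + f (c m) v }

lemma chainValues_nonempty {V : Type*} (K : Set V) (f : V → V → ℝ) (v x : V)
    (hx : x ∈ K) : (chainValues K f v x).Nonempty :=
  ⟨f x v, 0, fun _ => x, rfl, fun _ => hx, by simp⟩

lemma chainValues_prepend {V : Type*} (K : Set V) (f : V → V → ℝ) (v : V) {x y : V}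
    (hx : x ∈ K) {s : ℝ} (hs : s ∈ chainValues K f v y) :
    f x y + s ∈ chainValues K f v x := by
  obtain ⟨m, c, hc0, hcK, rfl⟩ := hs
  refine ⟨m + 1, fun i => if i = 0 then x else c (i - 1), by simp, ?_, ?_⟩
  · intro i
    cases i with
    | zero => simpa using hx
    | succ n => simpa using hcK n
  · rw [Finset.sum_range_succ']
    simp only [Nat.succ_ne_zero, if_false, Nat.add_sub_cancel, if_pos rfl, hc0, if_true]
    ring

/-- Replacing the head of a chain by `x` gives a chain value for `x`, explicitly. -/
lemma chainValues_head {V : Type*} (K : Set V) (f : V → V → ℝ) (v : V) (x : V)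
    (hx : x ∈ K) (m : ℕ) (c : ℕ → V) (hcK : ∀ i, c i ∈ K) :
    (match m with
      | 0 => f x v
      | Nat.succ k => (∑ i ∈ Finset.range k, f (c (i + 1)) (c (i + 2))) + f (c (k + 1)) v
          + f x (c 1)) ∈ chainValues K f v x := by
  refine ⟨m, fun i => if i = 0 then x else c i, by simp, ?_, ?_⟩
  · intro i
    cases i with
    | zero => simpa using hx
    | succ n => simpa using hcK (n + 1)
  · cases m with
    | zero => simp
    | succ k =>
      rw [Finset.sum_range_succ']
      simp only [Nat.succ_ne_zero, if_false, if_pos rfl, if_true]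
      ring

/-- The chain value itself, rewritten in head-split form. -/
lemma chain_sum_split {V : Type*} (f : V → V → ℝ) (v : V) (m : ℕ) (c : ℕ → V) :
    (∑ i ∈ Finset.range m, f (c i) (c (i + 1))) + f (c m) v =
    (match m with
      | 0 => f (c 0) v
      | Nat.succ k => (∑ i ∈ Finset.range k, f (c (i + 1)) (c (i + 2))) + f (c (k + 1)) v
          + f (c 0) (c 1)) := by
  cases m with
  | zero => simp
  | succ k =>
    rw [Finset.sum_range_succ']
    ring


theorem cyclic_pseudomonotone_type_I_potential
    {V : Type*} [AddCommGroup V] [Module ℝ V]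
    (K : Set V) (hKconv : Convex ℝ K) (f : V → V → ℝ)
    (htypeI : ∀ (n : ℕ) (x : ℕ → V), 2 ≤ n → (∀ i, x i ∈ K) →
      (∑ i ∈ Finset.range (n - 2), f (x i) (x (i + 1))) ≤ f (x 0) (x (n - 1)) →
      f (x (n - 1)) (x (n - 2)) ≤ 0)
    (u v : V) (hu : u ∈ K) (hv : v ∈ K) (huv : 0 < f u v)
    (hbdd : ∀ x ∈ K, ∀ s ∈ chainValues K f v x, f x u ≤ s) :
    (∀ x ∈ K, ∀ y ∈ K,
        (-(sInf (chainValues K f v y))) - (-(sInf (chainValues K f v x))) ≤ f x y) ∧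
    ((∀ y ∈ K, ConcaveOn ℝ K (fun x => f x y)) →
        ConvexOn ℝ K (fun x => -(sInf (chainValues K f v x)))) := by
  have hbb : ∀ x ∈ K, BddBelow (chainValues K f v x) :=
    fun x hx => ⟨f x u, fun s hs => hbdd x hx s hs⟩
  constructor
  · intro x hx y hy
    have h1 : sInf (chainValues K f v x) - f x y ≤ sInf (chainValues K f v y) := by
      refine le_csInf (chainValues_nonempty K f v y hy) (fun s hs => ?_)
      have := csInf_le (hbb x hx) (chainValues_prepend K f v hx hs)
      linarith
    linarith
  · intro hconc
    refine ⟨hKconv, fun xm hxm ym hym a b ha hb hab => ?_⟩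
    simp only [smul_eq_mul, mul_neg]
    rw [← neg_add, neg_le_neg_iff]
    set z := a • xm + b • ym with hz
    have hzK : z ∈ K := hKconv hxm hym ha hb hab
    refine le_csInf (chainValues_nonempty K f v z hzK) (fun s hs => ?_)
    obtain ⟨m, c, hc0, hcK, rfl⟩ := hs
    rw [chain_sum_split f v m c, hc0]
    have hsx := csInf_le (hbb xm hxm) (chainValues_head K f v xm hxm m c hcK)
    have hsy := csInf_le (hbb ym hym) (chainValues_head K f v ym hym m c hcK)
    cases m with
    | zero =>
      simp only at hsx hsy ⊢
      have hc := (hconc v hv).2 hxm hym ha hb hab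
      simp only [smul_eq_mul] at hc
      rw [← hz] at hc
      nlinarith [mul_le_mul_of_nonneg_left hsx ha, mul_le_mul_of_nonneg_left hsy hb]
    | succ k =>
      simp only at hsx hsy ⊢
      have hc := (hconc (c 1) (hcK 1)).2 hxm hym ha hb hab
      simp only [smul_eq_mul] at hc
      rw [← hz] at hc
      set T : ℝ := (∑ i ∈ Finset.range k, f (c (i + 1)) (c (i + 2))) + f (c (k + 1)) v with hT
      have hT1 : a * T + b * T = T := by rw [← add_mul, hab, one_mul]
      linarith [mul_le_mul_of_nonneg_left hsx ha, mul_le_mul_of_nonneg_left hsy hb]
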